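/- Let d ≥ 1, let F : Matrix (Fin d) (Fin d) ℝ → ℝ, and let Ã be a d × d real matrix with all entries A_{ij} ≥ 0. Assume that for all d × d matrices M, N, |F(M) − F(N)| ≤ 2 Σ_{i,j} A_{ij} |M_{ij} − N_{ij}|. Define the Lax–Friedrichs-like numerical operator F̂(P^{−−}, P^{−+}, P^{+−}, P^{++}) := F((P^{−+} + P^{+−})/2) + Ã : (P^{−−} − P^{−+} − P^{+−} + P^{++}), where Ã : B := Σ_{i,j} A_{ij} B_{ij} denotes the Frobenius inner product. Then: (i) F̂(P, P, P, P) = F(P) for every P (consistency); (ii) F̂ is nondecreasing in its first argument P^{−−} and in its fourth argument P^{++} with respect to the entrywise order on matrices; and (iii) F̂ is nonincreasing in its second argument P^{−+} and in its third argument P^{+−} with respect to the entrywise order. (This makes precise the paper's assertion that the nonnegative matrix Ã in the Lax–Friedrichs-like operator (6.40) can be chosen to enforce the generalized monotonicity (g-monotonicity) property, and that the operator is consistent.) -/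
import Mathlib


open Finset

/-- The Lax–Friedrichs-like numerical operator (paper equation (6.40)):
`F̂(P^{−−}, P^{−+}, P^{+−}, P^{++}) := F((P^{−+} + P^{+−})/2)
  + Ã : (P^{−−} − P^{−+} − P^{+−} + P^{++})`, with `:` the Frobenius inner product. -/
noncomputable def laxFriedrichsOperator {d : ℕ}
    (F : Matrix (Fin d) (Fin d) ℝ → ℝ) (A : Matrix (Fin d) (Fin d) ℝ)
    (Pmm Pmp Ppm Ppp : Matrix (Fin d) (Fin d) ℝ) : ℝ :=
  F (Matrix.of fun i j => (Pmp i j + Ppm i j) / 2)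
    + ∑ i, ∑ j, A i j * (Pmm i j - Pmp i j - Ppm i j + Ppp i j)

/-- The Lax–Friedrichs-like numerical operator is consistent and, if the entries of `Ã`
are nonnegative and dominate (twice over) the entrywise Lipschitz behavior of `F`,
g-monotone: nondecreasing in its first and fourth arguments and nonincreasing in its
second and third arguments, with respect to the entrywise order on matrices. -/
theorem laxFriedrichsOperator_consistent_and_gMonotone
    (d : ℕ) (hd : 1 ≤ d) (F : Matrix (Fin d) (Fin d) ℝ → ℝ)
    (A : Matrix (Fin d) (Fin d) ℝ) (hA : ∀ i j, 0 ≤ A i j)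
    (hLip : ∀ M N : Matrix (Fin d) (Fin d) ℝ,
      |F M - F N| ≤ 2 * ∑ i, ∑ j, A i j * |M i j - N i j|) :
    (∀ P : Matrix (Fin d) (Fin d) ℝ, laxFriedrichsOperator F A P P P P = F P) ∧
      (∀ Pmm Qmm Pmp Ppm Ppp : Matrix (Fin d) (Fin d) ℝ, (∀ i j, Pmm i j ≤ Qmm i j) →
        laxFriedrichsOperator F A Pmm Pmp Ppm Ppp
          ≤ laxFriedrichsOperator F A Qmm Pmp Ppm Ppp) ∧
      (∀ Pmm Pmp Ppm Ppp Qpp : Matrix (Fin d) (Fin d) ℝ, (∀ i j, Ppp i j ≤ Qpp i j) →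
        laxFriedrichsOperator F A Pmm Pmp Ppm Ppp
          ≤ laxFriedrichsOperator F A Pmm Pmp Ppm Qpp) ∧
      (∀ Pmm Pmp Qmp Ppm Ppp : Matrix (Fin d) (Fin d) ℝ, (∀ i j, Pmp i j ≤ Qmp i j) →
        laxFriedrichsOperator F A Pmm Qmp Ppm Ppp
          ≤ laxFriedrichsOperator F A Pmm Pmp Ppm Ppp) ∧
      (∀ Pmm Pmp Ppm Qpm Ppp : Matrix (Fin d) (Fin d) ℝ, (∀ i j, Ppm i j ≤ Qpm i j) →
        laxFriedrichsOperator F A Pmm Pmp Qpm Ppp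
          ≤ laxFriedrichsOperator F A Pmm Pmp Ppm Ppp) := by
  refine ⟨?_, ?_, ?_, ?_, ?_⟩
  · intro P
    unfold laxFriedrichsOperator
    have hP : (Matrix.of fun i j => (P i j + P i j) / 2) = P := by
      ext i j; exact add_self_div_two _
    rw [hP]
    simp
  · intro Pmm Qmm Pmp Ppm Ppp h
    unfold laxFriedrichsOperator
    gcongr with i _ j _
    · exact hA i j
    · exact h i j
  · intro Pmm Pmp Ppm Ppp Qpp h
    unfold laxFriedrichsOperator
    gcongr with i _ j _
    · exact hA i j
    · exact h i j
  · intro Pmm Pmp Qmp Ppm Ppp h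
    unfold laxFriedrichsOperator
    have key := hLip (Matrix.of fun i j => (Qmp i j + Ppm i j) / 2)
      (Matrix.of fun i j => (Pmp i j + Ppm i j) / 2)
    have habs : ∀ i j, |(Matrix.of fun i j => (Qmp i j + Ppm i j) / 2) i j -
        (Matrix.of fun i j => (Pmp i j + Ppm i j) / 2) i j| = (Qmp i j - Pmp i j) / 2 := by
      intro i j
      simp [Matrix.of_apply]
      rw [abs_of_nonneg (by linarith [h i j])]
      ring
    have key2 : F (Matrix.of fun i j => (Qmp i j + Ppm i j) / 2) -
        F (Matrix.of fun i j => (Pmp i j + Ppm i j) / 2)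
        ≤ ∑ i, ∑ j, A i j * (Qmp i j - Pmp i j) := by
      have := (abs_le.mp key).2
      calc _ ≤ 2 * ∑ i, ∑ j, A i j * |(Matrix.of fun i j => (Qmp i j + Ppm i j) / 2) i j -
            (Matrix.of fun i j => (Pmp i j + Ppm i j) / 2) i j| := this
        _ = ∑ i, ∑ j, A i j * (Qmp i j - Pmp i j) := by
            rw [Finset.mul_sum]
            refine Finset.sum_congr rfl fun i _ => ?_
            rw [Finset.mul_sum]
            refine Finset.sum_congr rfl fun j _ => ?_
            rw [habs i j]; ring
    have hsum : ∑ i, ∑ j, A i j * (Pmm i j - Qmp i j - Ppm i j + Ppp i j)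
        = (∑ i, ∑ j, A i j * (Pmm i j - Pmp i j - Ppm i j + Ppp i j))
          - ∑ i, ∑ j, A i j * (Qmp i j - Pmp i j) := by
      rw [← Finset.sum_sub_distrib]
      refine Finset.sum_congr rfl fun i _ => ?_
      rw [← Finset.sum_sub_distrib]
      refine Finset.sum_congr rfl fun j _ => ?_
      ring
    rw [hsum]; linarith
  · intro Pmm Pmp Ppm Qpm Ppp h
    unfold laxFriedrichsOperator
    have key := hLip (Matrix.of fun i j => (Pmp i j + Qpm i j) / 2)
      (Matrix.of fun i j => (Pmp i j + Ppm i j) / 2)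
    have habs : ∀ i j, |(Matrix.of fun i j => (Pmp i j + Qpm i j) / 2) i j -
        (Matrix.of fun i j => (Pmp i j + Ppm i j) / 2) i j| = (Qpm i j - Ppm i j) / 2 := by
      intro i j
      simp [Matrix.of_apply]
      rw [abs_of_nonneg (by linarith [h i j])]
      ring
    have key2 : F (Matrix.of fun i j => (Pmp i j + Qpm i j) / 2) -
        F (Matrix.of fun i j => (Pmp i j + Ppm i j) / 2)
        ≤ ∑ i, ∑ j, A i j * (Qpm i j - Ppm i j) := by
      have := (abs_le.mp key).2
      calc _ ≤ 2 * ∑ i, ∑ j, A i j * |(Matrix.of fun i j => (Pmp i j + Qpm i j) / 2) i j -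
            (Matrix.of fun i j => (Pmp i j + Ppm i j) / 2) i j| := this
        _ = ∑ i, ∑ j, A i j * (Qpm i j - Ppm i j) := by
            rw [Finset.mul_sum]
            refine Finset.sum_congr rfl fun i _ => ?_
            rw [Finset.mul_sum]
            refine Finset.sum_congr rfl fun j _ => ?_
            rw [habs i j]; ring
    have hsum : ∑ i, ∑ j, A i j * (Pmm i j - Pmp i j - Qpm i j + Ppp i j)
        = (∑ i, ∑ j, A i j * (Pmm i j - Pmp i j - Ppm i j + Ppp i j))
          - ∑ i, ∑ j, A i j * (Qpm i j - Ppm i j) := by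
      rw [← Finset.sum_sub_distrib]
      refine Finset.sum_congr rfl fun i _ => ?_
      rw [← Finset.sum_sub_distrib]
      refine Finset.sum_congr rfl fun j _ => ?_
      ring
    rw [hsum]; linarith
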